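/- arXiv:2303.05673 — 6 statements merged into one kernel-verified Lean document; each statement's English description precedes it below -/
import Mathlib

section
/- Let G, H be directed multigraphs and φ : G → H a surjective graph homomorphism such that for each vertex v of G, φ restricts to a bijection from the outgoing edge set E_o(v) onto E_o(φ(v)). Then there exists a non-edge-collapsing graph equivalence relation ∼ on G and a graph isomorphism ψ : G/∼ → H satisfying ψ([x]) = φ(x) for all vertices and edges x of G. -/
/-- A directed multigraph: vertices, edges, origin and terminus maps. -/
structure Multigraph where
  V : Type
  E : Type
  o : E → V
  t : E → V

namespace Multigraph

/-- Graph homomorphism. -/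
structure Hom (G H : Multigraph) where
  onV : G.V → H.V
  onE : G.E → H.E
  map_o : ∀ e, H.o (onE e) = onV (G.o e)
  map_t : ∀ e, H.t (onE e) = onV (G.t e)

/-- Graph isomorphism. -/
structure Iso (G H : Multigraph) extends Hom G H where
  bijV : Function.Bijective onV
  bijE : Function.Bijective onE

/-- Rooted isomorphism of rooted multigraphs. -/
def RootedIso (G : Multigraph) (S : G.V) (H : Multigraph) (R : H.V) : Prop :=
  ∃ φ : Iso G H, φ.onV S = R

/-- Outgoing edge neighbourhood of a vertex. -/
def Eo (G : Multigraph) (v : G.V) : Set G.E := {e | G.o e = v}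

/-- Incoming edge neighbourhood of a vertex. -/
def Et (G : Multigraph) (v : G.V) : Set G.E := {e | G.t e = v}

/-- A graph equivalence relation: compatible equivalences on vertices and edges. -/
structure GraphEquiv (G : Multigraph) where
  rV : G.V → G.V → Prop
  rE : G.E → G.E → Prop
  equivV : Equivalence rV
  equivE : Equivalence rE
  compat_o : ∀ e f, rE e f → rV (G.o e) (G.o f)
  compat_t : ∀ e f, rE e f → rV (G.t e) (G.t f)

/-- Non-edge-collapsing graph equivalence relation. -/
def GraphEquiv.NonEdgeCollapsing {G : Multigraph} (s : GraphEquiv G) : Prop :=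
  ∀ v v', s.rV v v' → ∀ e, G.o e = v → ∃! e', G.o e' = v' ∧ s.rE e e'

/-- Quotient graph by a graph equivalence relation. -/
def GraphEquiv.quot {G : Multigraph} (s : GraphEquiv G) : Multigraph where
  V := Quot s.rV
  E := Quot s.rE
  o := Quot.lift (fun e => Quot.mk s.rV (G.o e)) (fun e f h => Quot.sound (s.compat_o e f h))
  t := Quot.lift (fun e => Quot.mk s.rV (G.t e)) (fun e f h => Quot.sound (s.compat_t e f h))

/-- A graph is non-redundant if its only non-edge-collapsing equivalence relation is trivial. -/
def NonRedundant (G : Multigraph) : Prop :=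
  ∀ s : GraphEquiv G, s.NonEdgeCollapsing →
    (∀ v w, s.rV v w → v = w) ∧ (∀ e f, s.rE e f → e = f)

/-- Directed walks in `G` starting at `S`, indexed by the terminus. -/
inductive Walk (G : Multigraph) (S : G.V) : G.V → Type
  | nil : Walk G S S
  | snoc {v : G.V} (w : Walk G S v) (e : G.E) (h : G.o e = v) : Walk G S (G.t e)

/-- Length of a walk. -/
def Walk.length {G : Multigraph} {S : G.V} : ∀ {v : G.V}, Walk G S v → ℕ
  | _, .nil => 0
  | _, .snoc w _ _ => w.length + 1

/-- Reachability by a directed walk. -/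
def Reaches (G : Multigraph) (x y : G.V) : Prop := Nonempty (Walk G x y)

/-- `S` is a root: every vertex is reachable from `S`. -/
def IsRoot (G : Multigraph) (S : G.V) : Prop := ∀ v, Reaches G S v

/-- No two edges share a terminus. -/
def NoClashes (G : Multigraph) : Prop := ∀ e f : G.E, G.t e = G.t f → e = f

/-- No non-empty closed walks. -/
def Acyclic (G : Multigraph) : Prop := ∀ v : G.V, ∀ w : Walk G v v, w.length = 0

/-- The outgoing subgraph `G_x`: induced on the vertices reachable from `x`. -/
def outGraph (G : Multigraph) (x : G.V) : Multigraph where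
  V := {y : G.V // Reaches G x y}
  E := {e : G.E // Reaches G x (G.o e)}
  o := fun e => ⟨G.o e.1, e.2⟩
  t := fun e => ⟨G.t e.1, e.2.elim fun w => ⟨w.snoc e.1 rfl⟩⟩

/-- The natural root of `G_x`. -/
def rootOut (G : Multigraph) (x : G.V) : (outGraph G x).V := ⟨x, ⟨Walk.nil⟩⟩

/-- o-equivalence of vertices: rooted isomorphism of their outgoing graphs. -/
def OEquiv (G : Multigraph) (v w : G.V) : Prop :=
  RootedIso (outGraph G v) (rootOut G v) (outGraph G w) (rootOut G w)

/-- Walks starting at `S` (with arbitrary terminus). -/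
abbrev WalkFrom (G : Multigraph) (S : G.V) : Type := Σ v : G.V, Walk G S v

/-- Terminus of a walk. -/
def term {G : Multigraph} {S : G.V} (w : WalkFrom G S) : G.V := w.1

/-- The unfolding tree `T(G, S)`: vertices are walks from `S`, edges are one-step extensions. -/
def unfoldTree (G : Multigraph) (S : G.V) : Multigraph where
  V := WalkFrom G S
  E := Σ v : G.V, Walk G S v × {e : G.E // G.o e = v}
  o := fun x => ⟨x.1, x.2.1⟩
  t := fun x => ⟨G.t x.2.2.1, x.2.1.snoc x.2.2.1 x.2.2.2⟩

/-- The empty walk at `S`, root of the unfolding tree. -/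
def nilWalk (G : Multigraph) (S : G.V) : WalkFrom G S := ⟨S, Walk.nil⟩

/-- Prefix order on walks from `S`. -/
inductive IsPrefix (G : Multigraph) (S : G.V) : WalkFrom G S → WalkFrom G S → Prop
  | refl (w : WalkFrom G S) : IsPrefix G S w w
  | snoc {w : WalkFrom G S} {v : G.V} (u : Walk G S v) (e : G.E) (h : G.o e = v) :
      IsPrefix G S w ⟨v, u⟩ → IsPrefix G S w ⟨G.t e, u.snoc e h⟩

/-- The half-tree of the unfolding tree rooted at the walk `w`. -/
def halfTree (G : Multigraph) (S : G.V) (w : WalkFrom G S) : Multigraph where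
  V := {u : WalkFrom G S // IsPrefix G S w u}
  E := {x : Σ v : G.V, Walk G S v × {e : G.E // G.o e = v} // IsPrefix G S w ⟨x.1, x.2.1⟩}
  o := fun x => ⟨⟨x.1.1, x.1.2.1⟩, x.2⟩
  t := fun x => ⟨⟨G.t x.1.2.2.1, x.1.2.1.snoc x.1.2.2.1 x.1.2.2.2⟩,
    IsPrefix.snoc x.1.2.1 x.1.2.2.1 x.1.2.2.2 x.2⟩

/-- A subspace of the unfolding tree: a set of walks closed under extension. -/
def IsSubspace (G : Multigraph) (S : G.V) (𝒮 : Set (WalkFrom G S)) : Prop :=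
  ∀ w ∈ 𝒮, ∀ w', IsPrefix G S w w' → w' ∈ 𝒮

/-- An inescapable subspace: every walk extends into it. -/
def Inescapable (G : Multigraph) (S : G.V) (𝒮 : Set (WalkFrom G S)) : Prop :=
  ∀ w : WalkFrom G S, ∃ u ∈ 𝒮, IsPrefix G S w u

/-- A cofinite subspace: a finite union of half-trees. -/
def CofiniteSubspace (G : Multigraph) (S : G.V) (𝒮 : Set (WalkFrom G S)) : Prop :=
  ∃ F : Set (WalkFrom G S), F.Finite ∧ 𝒮 = {u | ∃ x ∈ F, IsPrefix G S x u}

/-- `B` is a basis of the subspace `𝒮`: a prefix-antichain in `𝒮` such that every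
walk in `𝒮` has a prefix in `B`. -/
def IsBasis (G : Multigraph) (S : G.V) (𝒮 B : Set (WalkFrom G S)) : Prop :=
  B ⊆ 𝒮 ∧ (∀ b ∈ B, ∀ b' ∈ B, IsPrefix G S b b' → b = b') ∧
    ∀ w ∈ 𝒮, ∃ b ∈ B, IsPrefix G S b w

/-- Deleting a set of edges from a graph (also removing vertices all of whose
incident edges are deleted). -/
def deleteEdges (G : Multigraph) (F : Set G.E) : Multigraph where
  V := {v : G.V // ¬((∃ e, G.o e = v ∨ G.t e = v) ∧ ∀ e, (G.o e = v ∨ G.t e = v) → e ∈ F)}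
  E := {e : G.E // e ∉ F}
  o := fun e => ⟨G.o e.1, fun h => e.2 (h.2 e.1 (Or.inl rfl))⟩
  t := fun e => ⟨G.t e.1, fun h => e.2 (h.2 e.1 (Or.inr rfl))⟩

/-- Two trees are almost isomorphic: after removing finite subtrees (given by their
finite edge sets), the remainders are isomorphic. -/
def AlmostIso (T1 T2 : Multigraph) : Prop :=
  ∃ F1 : Set T1.E, F1.Finite ∧ ∃ F2 : Set T2.E, F2.Finite ∧
    Nonempty (Iso (deleteEdges T1 F1) (deleteEdges T2 F2))

open scoped Classical in
/-- The multiset of termini of the outgoing edges of `v`. -/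
noncomputable def outSum (G : Multigraph) [Fintype G.E] (v : G.V) : Multiset G.V :=
  ∑ e ∈ Finset.univ.filter (fun e => G.o e = v), ({G.t e} : Multiset G.V)

/-- The defining relations of the graph monoid: `v = Σ_{e ∈ E_o(v)} t(e)` for non-sinks. -/
def monoidRel (G : Multigraph) [Fintype G.E] : Multiset G.V → Multiset G.V → Prop :=
  fun s u => ∃ v : G.V, (∃ e, G.o e = v) ∧ s = {v} ∧ u = outSum G v

/-- Equality in the graph monoid `M(G)`: the additive congruence generated by the
graph relations on the free commutative monoid `Multiset G.V`. -/
def monoidEq (G : Multigraph) [Fintype G.E] (s u : Multiset G.V) : Prop :=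
  addConGen (monoidRel G) s u

/-- A robustly rooted graph: it has a root, and every root has an out-neighbour that
is again a root. -/
def RobustlyRooted (G : Multigraph) : Prop :=
  (∃ S, IsRoot G S) ∧ ∀ v, IsRoot G v → ∃ e, G.o e = v ∧ IsRoot G (G.t e)

/-- The two-vertex multigraph with adjacency matrix `(A B; C D)`;
`false` is the vertex `x`, `true` is the vertex `y`. -/
def twoVertexGraph (A B C D : ℕ) : Multigraph where
  V := Bool
  E := (Fin A ⊕ Fin B) ⊕ (Fin C ⊕ Fin D)
  o := fun e => match e with | .inl _ => false | .inr _ => true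
  t := fun e => match e with
    | .inl (.inl _) => false
    | .inl (.inr _) => true
    | .inr (.inl _) => false
    | .inr (.inr _) => true

instance (A B C D : ℕ) : Fintype (twoVertexGraph A B C D).E :=
  inferInstanceAs (Fintype ((Fin A ⊕ Fin B) ⊕ (Fin C ⊕ Fin D)))

end Multigraph

open Multigraph

/-- A surjective homomorphism which is bijective on every outgoing edge
neighbourhood factors as a quotient by a non-edge-collapsing equivalence relation
followed by an isomorphism. -/
theorem statement1 (G H : Multigraph) (φ : Hom G H)
    (hsurjV : Function.Surjective φ.onV) (hsurjE : Function.Surjective φ.onE)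
    (hbij : ∀ v : G.V, Set.BijOn φ.onE (Eo G v) (Eo H (φ.onV v))) :
    ∃ s : GraphEquiv G, s.NonEdgeCollapsing ∧
      ∃ ψ : Iso s.quot H,
        (∀ v : G.V, ψ.onV (Quot.mk s.rV v) = φ.onV v) ∧
        (∀ e : G.E, ψ.onE (Quot.mk s.rE e) = φ.onE e) := by
  refine ⟨{ rV := fun v w => φ.onV v = φ.onV w
            rE := fun e f => φ.onE e = φ.onE f
            equivV := ⟨fun _ => rfl, Eq.symm, Eq.trans⟩
            equivE := ⟨fun _ => rfl, Eq.symm, Eq.trans⟩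
            compat_o := fun e f h => by
              have := φ.map_o e; have := φ.map_o f; simp_all
            compat_t := fun e f h => by
              have := φ.map_t e; have := φ.map_t f; simp_all }, ?_, ?_⟩
  · intro v v' hv e he
    have hmem : φ.onE e ∈ Eo H (φ.onV v') := by
      have := (hbij v).1 (show e ∈ Eo G v from he)
      simpa [show φ.onV v = φ.onV v' from hv] using this
    obtain ⟨e', he', hee'⟩ := (hbij v').2.2 hmem
    refine ⟨e', ⟨he', hee'.symm⟩, ?_⟩
    intro f ⟨hf, hff⟩
    exact (hbij v').2.1 hf he' (hff.symm.trans hee'.symm)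
  · refine ⟨⟨⟨Quot.lift φ.onV (fun _ _ h => h), Quot.lift φ.onE (fun _ _ h => h), ?_, ?_⟩, ⟨?_, ?_⟩, ⟨?_, ?_⟩⟩, fun _ => rfl, fun _ => rfl⟩
    · rintro ⟨e⟩; simpa [GraphEquiv.quot] using φ.map_o e
    · rintro ⟨e⟩; simpa [GraphEquiv.quot] using φ.map_t e
    · rintro ⟨v⟩ ⟨w⟩ h; exact Quot.sound h
    · exact fun v => ⟨Quot.mk _ (hsurjV v).choose, (hsurjV v).choose_spec⟩
    · rintro ⟨e⟩ ⟨f⟩ h; exact Quot.sound h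
    · exact fun e => ⟨Quot.mk _ (hsurjE e).choose, (hsurjE e).choose_spec⟩
end

section
/- For any directed multigraph G there exists a non-edge-collapsing graph equivalence relation on G whose vertex component is o-equivalence (two vertices being o-equivalent when their outgoing subgraphs are rooted-isomorphic). -/
namespace Multigraph

/-! ### Auxiliary development for statement2 -/

section Aux

variable {G H K : Multigraph}

def Hom.id (G : Multigraph) : Hom G G :=
  ⟨fun v => v, fun e => e, fun _ => rfl, fun _ => rfl⟩

def Iso.refl (G : Multigraph) : Iso G G :=
  ⟨Hom.id G, Function.bijective_id, Function.bijective_id⟩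

def Hom.comp (ψ : Hom H K) (φ : Hom G H) : Hom G K where
  onV := ψ.onV ∘ φ.onV
  onE := ψ.onE ∘ φ.onE
  map_o := fun e => by simp only [Function.comp_apply, ψ.map_o, φ.map_o]
  map_t := fun e => by simp only [Function.comp_apply, ψ.map_t, φ.map_t]

def Iso.comp (ψ : Iso H K) (φ : Iso G H) : Iso G K :=
  ⟨ψ.toHom.comp φ.toHom, ψ.bijV.comp φ.bijV, ψ.bijE.comp φ.bijE⟩

noncomputable def Iso.symm (φ : Iso G H) : Iso H G where
  onV := (Equiv.ofBijective φ.onV φ.bijV).symm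
  onE := (Equiv.ofBijective φ.onE φ.bijE).symm
  map_o := fun e => by
    apply (Equiv.ofBijective φ.onV φ.bijV).injective
    show φ.onV _ = φ.onV _
    rw [← φ.map_o]
    show H.o ((Equiv.ofBijective φ.onE φ.bijE) ((Equiv.ofBijective φ.onE φ.bijE).symm e)) =
      (Equiv.ofBijective φ.onV φ.bijV) ((Equiv.ofBijective φ.onV φ.bijV).symm (H.o e))
    rw [Equiv.apply_symm_apply, Equiv.apply_symm_apply]
  map_t := fun e => by
    apply (Equiv.ofBijective φ.onV φ.bijV).injective
    show φ.onV _ = φ.onV _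
    rw [← φ.map_t]
    show H.t ((Equiv.ofBijective φ.onE φ.bijE) ((Equiv.ofBijective φ.onE φ.bijE).symm e)) =
      (Equiv.ofBijective φ.onV φ.bijV) ((Equiv.ofBijective φ.onV φ.bijV).symm (H.t e))
    rw [Equiv.apply_symm_apply, Equiv.apply_symm_apply]
  bijV := (Equiv.ofBijective φ.onV φ.bijV).symm.bijective
  bijE := (Equiv.ofBijective φ.onE φ.bijE).symm.bijective

theorem Iso.symm_onV_apply (φ : Iso G H) (v : G.V) : φ.symm.onV (φ.onV v) = v :=
  (Equiv.ofBijective φ.onV φ.bijV).symm_apply_apply v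

def Walk.append {a b : G.V} (w : Walk G a b) : ∀ {c : G.V}, Walk G b c → Walk G a c
  | _, .nil => w
  | _, .snoc u e h => .snoc (w.append u) e h

theorem Reaches.trans {a b c : G.V} : Reaches G a b → Reaches G b c → Reaches G a c
  | ⟨w⟩, ⟨u⟩ => ⟨w.append u⟩

theorem Reaches.map (φ : Hom G H) {a b : G.V} (h : Reaches G a b) :
    Reaches H (φ.onV a) (φ.onV b) := by
  obtain ⟨w⟩ := h
  induction w with
  | nil => exact ⟨.nil⟩
  | snoc w e he ih =>
    obtain ⟨u⟩ := ih
    rw [← φ.map_t]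
    exact ⟨u.snoc (φ.onE e) (by rw [φ.map_o, he])⟩

/-- The inclusion of an outgoing subgraph. -/
def outHom (G : Multigraph) (v : G.V) : Hom (outGraph G v) G :=
  ⟨Subtype.val, Subtype.val, fun _ => rfl, fun _ => rfl⟩

def liftWalk {v a : G.V} (ha : Reaches G v a) :
    ∀ {y : G.V}, (w : Walk G a y) → (hy : Reaches G v y) →
      Walk (outGraph G v) ⟨a, ha⟩ ⟨y, hy⟩
  | _, .nil, _ => Walk.nil
  | _, .snoc w e h, _ =>
    Walk.snoc (liftWalk ha w (ha.trans ⟨w⟩)) ⟨e, by rw [h]; exact ha.trans ⟨w⟩⟩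
      (Subtype.ext h)

theorem reaches_out {v : G.V} (x y : (outGraph G v).V) (h : Reaches G x.1 y.1) :
    Reaches (outGraph G v) x y :=
  h.elim fun w => ⟨liftWalk x.2 w y.2⟩

theorem reaches_val {v : G.V} {x y : (outGraph G v).V} (h : Reaches (outGraph G v) x y) :
    Reaches G x.1 y.1 :=
  h.map (outHom G v)

/-- Transfer an isomorphism of out-graphs down to out-graphs of interior vertices. -/
noncomputable def outTransfer {v w : G.V} (ψ : Iso (outGraph G v) (outGraph G w))
    (u : (outGraph G v).V) :
    Iso (outGraph G u.1) (outGraph G (ψ.onV u).1) where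
  onV := fun y =>
    ⟨(ψ.onV ⟨y.1, u.2.trans y.2⟩).1,
      reaches_val ((reaches_out u ⟨y.1, u.2.trans y.2⟩ y.2).map ψ.toHom)⟩
  onE := fun d =>
    ⟨(ψ.onE ⟨d.1, u.2.trans d.2⟩).1, by
      have h := congrArg Subtype.val (ψ.map_o (⟨d.1, u.2.trans d.2⟩ : (outGraph G v).E))
      show Reaches G (ψ.onV u).1 (G.o (ψ.onE ⟨d.1, u.2.trans d.2⟩).1)
      rw [show G.o (ψ.onE ⟨d.1, u.2.trans d.2⟩).1 =
        (ψ.onV ((outGraph G v).o ⟨d.1, u.2.trans d.2⟩)).1 from h]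
      exact reaches_val ((reaches_out u ((outGraph G v).o ⟨d.1, u.2.trans d.2⟩) d.2).map ψ.toHom)⟩
  map_o := fun d => by
    have h := congrArg Subtype.val (ψ.map_o (⟨d.1, u.2.trans d.2⟩ : (outGraph G v).E))
    exact Subtype.ext h
  map_t := fun d => by
    have h := congrArg Subtype.val (ψ.map_t (⟨d.1, u.2.trans d.2⟩ : (outGraph G v).E))
    exact Subtype.ext h
  bijV := by
    constructor
    · intro y y' h
      have hv := congrArg Subtype.val h
      have h1 : (⟨y.1, u.2.trans y.2⟩ : (outGraph G v).V) = ⟨y'.1, u.2.trans y'.2⟩ :=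
        ψ.bijV.1 (Subtype.ext hv)
      have h2 := congrArg Subtype.val h1
      exact Subtype.ext h2
    · intro z
      obtain ⟨Y, hY⟩ := ψ.bijV.2 ⟨z.1, (ψ.onV u).2.trans z.2⟩
      have h2 : Reaches (outGraph G w) (ψ.onV u) (ψ.onV Y) := by
        rw [hY]; exact reaches_out _ _ z.2
      have h3 := h2.map ψ.symm.toHom
      rw [ψ.symm_onV_apply u, ψ.symm_onV_apply Y] at h3
      refine ⟨⟨Y.1, reaches_val h3⟩, Subtype.ext ?_⟩
      show (ψ.onV ⟨Y.1, _⟩).1 = z.1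
      have : (⟨Y.1, u.2.trans (reaches_val h3)⟩ : (outGraph G v).V) = Y := Subtype.ext rfl
      rw [this, hY]
  bijE := by
    constructor
    · intro d d' h
      have hv := congrArg Subtype.val h
      have h1 : (⟨d.1, u.2.trans d.2⟩ : (outGraph G v).E) = ⟨d'.1, u.2.trans d'.2⟩ :=
        ψ.bijE.1 (Subtype.ext hv)
      have h2 := congrArg Subtype.val h1
      exact Subtype.ext h2
    · intro z
      obtain ⟨D, hD⟩ := ψ.bijE.2 ⟨z.1, (ψ.onV u).2.trans z.2⟩
      have h2 : Reaches (outGraph G w) (ψ.onV u) (ψ.onV ((outGraph G v).o D)) := by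
        rw [← ψ.map_o, hD]
        exact reaches_out _ _ z.2
      have h3 := h2.map ψ.symm.toHom
      rw [ψ.symm_onV_apply u, ψ.symm_onV_apply ((outGraph G v).o D)] at h3
      have h4 : Reaches G u.1 (G.o D.1) := reaches_val h3
      refine ⟨⟨D.1, h4⟩, Subtype.ext ?_⟩
      show (ψ.onE ⟨D.1, _⟩).1 = z.1
      have : (⟨D.1, u.2.trans h4⟩ : (outGraph G v).E) = D := Subtype.ext rfl
      rw [this, hD]

theorem oequiv_of_iso {v w : G.V} (ψ : Iso (outGraph G v) (outGraph G w))
    (u : (outGraph G v).V) : OEquiv G u.1 (ψ.onV u).1 :=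
  ⟨outTransfer ψ u, Subtype.ext rfl⟩

variable (G)

theorem oequiv_refl (v : G.V) : OEquiv G v v := ⟨Iso.refl _, rfl⟩

theorem oequiv_symm {v w : G.V} : OEquiv G v w → OEquiv G w v
  | ⟨φ, h⟩ => ⟨φ.symm, by rw [← h, φ.symm_onV_apply]⟩

theorem oequiv_trans {u v w : G.V} : OEquiv G u v → OEquiv G v w → OEquiv G u w
  | ⟨φ, h⟩, ⟨ψ, h'⟩ => ⟨ψ.comp φ, by show ψ.onV (φ.onV _) = _; rw [h, h']⟩

theorem oequiv_equivalence : Equivalence (OEquiv G) :=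
  ⟨oequiv_refl G, oequiv_symm G, oequiv_trans G⟩

noncomputable section RepChoice

def oSetoid : Setoid G.V := ⟨OEquiv G, oequiv_equivalence G⟩

def rep (v : G.V) : G.V := (@Quotient.mk _ (oSetoid G) v).out

theorem oequiv_rep (v : G.V) : OEquiv G (rep G v) v := @Quotient.mk_out _ (oSetoid G) v

theorem rep_eq_of_oequiv {v w : G.V} (h : OEquiv G v w) : rep G v = rep G w :=
  congrArg Quotient.out (Quotient.sound (h : (oSetoid G).r v w))

theorem oequiv_of_rep_eq {v w : G.V} (h : rep G v = rep G w) : OEquiv G v w := by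
  have h1 : (@Quotient.mk _ (oSetoid G) v) = @Quotient.mk _ (oSetoid G) w := by
    rw [← (@Quotient.mk _ (oSetoid G) v).out_eq, ← (@Quotient.mk _ (oSetoid G) w).out_eq]
    exact congrArg _ h
  exact Quotient.exact h1

def isoRep (v : G.V) : Iso (outGraph G (rep G v)) (outGraph G v) :=
  (oequiv_rep G v).choose

theorem isoRep_root (v : G.V) :
    (isoRep G v).onV (rootOut G (rep G v)) = rootOut G v :=
  (oequiv_rep G v).choose_spec

def eqvE (v : G.V) : (outGraph G (rep G v)).E ≃ (outGraph G v).E :=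
  Equiv.ofBijective _ (isoRep G v).bijE

def pull (e : G.E) : (outGraph G (rep G (G.o e))).E :=
  (eqvE G (G.o e)).symm ⟨e, ⟨.nil⟩⟩

def pfst (e : G.E) : G.E := (pull G e).1

theorem push_pull (e : G.E) : (isoRep G (G.o e)).onE (pull G e) = ⟨e, ⟨.nil⟩⟩ :=
  (eqvE G (G.o e)).apply_symm_apply ⟨e, ⟨.nil⟩⟩

theorem o_pull (e : G.E) :
    (outGraph G (rep G (G.o e))).o (pull G e) = rootOut G (rep G (G.o e)) := by
  apply (isoRep G (G.o e)).bijV.1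
  rw [← (isoRep G (G.o e)).map_o, push_pull, isoRep_root]
  rfl

theorem o_pfst (e : G.E) : G.o (pfst G e) = rep G (G.o e) :=
  congrArg Subtype.val (o_pull G e)

theorem oequiv_t (e : G.E) : OEquiv G (G.t e) (G.t (pfst G e)) := by
  have hm := ((isoRep G (G.o e)).symm).map_t (⟨e, ⟨Walk.nil⟩⟩ : (outGraph G (G.o e)).E)
  have h := oequiv_of_iso (isoRep G (G.o e)).symm
    ((outGraph G (G.o e)).t ⟨e, ⟨Walk.nil⟩⟩)
  rw [← hm] at h
  exact h

theorem push_congr {w₁ w₂ : G.V} (hw : w₁ = w₂) {d₁ d₂ : G.E} (hd : d₁ = d₂)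
    (h₁ : Reaches G (rep G w₁) (G.o d₁)) (h₂ : Reaches G (rep G w₂) (G.o d₂)) :
    ((isoRep G w₁).onE ⟨d₁, h₁⟩).1 = ((isoRep G w₂).onE ⟨d₂, h₂⟩).1 := by
  subst hw; subst hd; rfl

theorem eq_push (e : G.E) :
    e = ((isoRep G (G.o e)).onE ⟨pfst G e, (pull G e).2⟩).1 :=
  (congrArg Subtype.val (push_pull G e)).symm

theorem pfst_push (w : G.V) (x d : G.E) (hd : Reaches G (rep G w) (G.o d))
    (hx : ((isoRep G w).onE ⟨d, hd⟩).1 = x) (hw : G.o x = w) : pfst G x = d := by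
  subst hw
  have h3 : eqvE G (G.o x) ⟨d, hd⟩ = ⟨x, ⟨Walk.nil⟩⟩ := Subtype.ext hx
  have h4 : pull G x = ⟨d, hd⟩ := by
    show (eqvE G (G.o x)).symm ⟨x, ⟨.nil⟩⟩ = ⟨d, hd⟩
    rw [← h3]; exact Equiv.symm_apply_apply _ _
  exact congrArg Subtype.val h4

end RepChoice

end Aux

end Multigraph

open Multigraph

/-- Every multigraph has a non-edge-collapsing equivalence relation whose
vertex component is o-equivalence. -/
theorem statement2 (G : Multigraph) :
    ∃ s : GraphEquiv G, s.NonEdgeCollapsing ∧ ∀ v w : G.V, s.rV v w ↔ OEquiv G v w := by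
  classical
  refine ⟨⟨OEquiv G, fun e f => rep G (G.o e) = rep G (G.o f) ∧ pfst G e = pfst G f,
    oequiv_equivalence G,
    ⟨fun e => ⟨rfl, rfl⟩, fun h => ⟨h.1.symm, h.2.symm⟩,
      fun h h' => ⟨h.1.trans h'.1, h.2.trans h'.2⟩⟩,
    fun e f h => oequiv_of_rep_eq G h.1,
    fun e f h => ?_⟩, ?_, fun v w => Iff.rfl⟩
  · -- compat_t
    refine (oequiv_equivalence G).trans (oequiv_t G e) ?_
    rw [h.2]
    exact (oequiv_equivalence G).symm (oequiv_t G f)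
  · -- NonEdgeCollapsing
    intro v v' hvv' e he
    have hrep : rep G (G.o e) = rep G v' :=
      (congrArg (rep G) he).trans (rep_eq_of_oequiv G hvv')
    have hd : Reaches G (rep G v') (G.o (pfst G e)) := hrep ▸ (pull G e).2
    set e' : G.E := ((isoRep G v').onE ⟨pfst G e, hd⟩).1 with he'
    have h2 : ((outGraph G (rep G v')).o ⟨pfst G e, hd⟩) = rootOut G (rep G v') :=
      Subtype.ext (by show G.o (pfst G e) = rep G v'; rw [o_pfst]; exact hrep)
    have ho : G.o e' = v' := by
      have h1 := (isoRep G v').map_o (⟨pfst G e, hd⟩ : (outGraph G (rep G v')).E)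
      rw [h2, isoRep_root] at h1
      exact congrArg Subtype.val h1
    have hpf : pfst G e' = pfst G e := pfst_push G v' e' (pfst G e) hd rfl ho
    refine ⟨e', ⟨ho, (congrArg (rep G) he).trans ((rep_eq_of_oequiv G hvv').trans
      (congrArg (rep G) ho).symm), hpf.symm⟩, ?_⟩
    rintro f ⟨hf, hr1, hr2⟩
    have h4 := eq_push G f
    have h5 : ((isoRep G (G.o f)).onE ⟨pfst G f, (pull G f).2⟩).1
        = ((isoRep G v').onE ⟨pfst G e, hd⟩).1 :=
      push_congr G hf hr2.symm _ _
    rw [h4, h5]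
end

section
/- If ∼¹ and ∼² are non-edge-collapsing graph equivalence relations on a directed multigraph G, then there exists a non-edge-collapsing graph equivalence relation ∼ on G whose vertex component contains the union of the vertex components of ∼¹ and ∼² (i.e., v ∼¹_V w or v ∼²_V w implies v ∼_V w). -/
open Multigraph

/-- A single non-edge-collapsing equivalence gives a transport bijection between
outgoing fibers of equivalent vertices, compatible with termini. -/
lemma single_transport {G : Multigraph} {s : GraphEquiv G} (hs : s.NonEdgeCollapsing)
    {v w : G.V} (h : s.rV v w) :
    ∃ φ : {e : G.E // G.o e = v} ≃ {e : G.E // G.o e = w},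
      ∀ x, s.rE x.1 (φ x).1 := by
  classical
  have h' : s.rV w v := s.equivV.symm h
  -- forward and backward maps by choice
  let f : {e : G.E // G.o e = v} → {e : G.E // G.o e = w} :=
    fun a => ⟨(hs v w h a.1 a.2).choose, (hs v w h a.1 a.2).choose_spec.1.1⟩
  have hf : ∀ a, s.rE a.1 (f a).1 := fun a => (hs v w h a.1 a.2).choose_spec.1.2
  let g : {e : G.E // G.o e = w} → {e : G.E // G.o e = v} :=
    fun b => ⟨(hs w v h' b.1 b.2).choose, (hs w v h' b.1 b.2).choose_spec.1.1⟩
  have hg : ∀ b, s.rE b.1 (g b).1 := fun b => (hs w v h' b.1 b.2).choose_spec.1.2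
  have key : ∀ (u u' : G.V) (hu : s.rV u u') (a a' : G.E),
      G.o a = u' → G.o a' = u' → ∀ (b : G.E), G.o b = u → s.rE b a → s.rE b a' → a = a' := by
    intro u u' hu a a' ha ha' b hb hba hba'
    obtain ⟨e', he', hun⟩ := hs u u' hu b hb
    exact (hun a ⟨ha, hba⟩).trans (hun a' ⟨ha', hba'⟩).symm
  refine ⟨⟨f, g, ?_, ?_⟩, hf⟩
  · intro a
    apply Subtype.ext
    exact key w v h' (g (f a)).1 a.1 (g (f a)).2 a.2 (f a).1 (f a).2
      (hg (f a)) (s.equivE.symm (hf a))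
  · intro b
    apply Subtype.ext
    exact key v w h (f (g b)).1 b.1 (f (g b)).2 b.2 (g b).1 (g b).2
      (hf (g b)) (s.equivE.symm (hg b))

/-- Two non-edge-collapsing equivalence relations have a common
non-edge-collapsing coarsening on vertices. -/
theorem statement4 (G : Multigraph) (s1 s2 : GraphEquiv G)
    (h1 : s1.NonEdgeCollapsing) (h2 : s2.NonEdgeCollapsing) :
    ∃ s : GraphEquiv G, s.NonEdgeCollapsing ∧
      ∀ v w : G.V, s1.rV v w ∨ s2.rV v w → s.rV v w := by
  classical
  set r : G.V → G.V → Prop := fun a b => s1.rV a b ∨ s2.rV a b with hrdef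
  set rV : G.V → G.V → Prop := Relation.EqvGen r with hrVdef
  have hequiv : Equivalence rV := Relation.EqvGen.is_equivalence r
  -- transport bijections along rV
  have hP : ∀ v w, rV v w → ∃ φ : {e : G.E // G.o e = v} ≃ {e : G.E // G.o e = w},
      ∀ x, rV (G.t x.1) (G.t (φ x).1) := by
    intro v w h
    induction h with
    | rel a b hab =>
      rcases hab with hab | hab
      · obtain ⟨φ, hφ⟩ := single_transport h1 hab
        exact ⟨φ, fun x => Relation.EqvGen.rel _ _ (Or.inl (s1.compat_t _ _ (hφ x)))⟩
      · obtain ⟨φ, hφ⟩ := single_transport h2 hab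
        exact ⟨φ, fun x => Relation.EqvGen.rel _ _ (Or.inr (s2.compat_t _ _ (hφ x)))⟩
    | refl a => exact ⟨Equiv.refl _, fun x => hequiv.refl _⟩
    | symm a b hab ih =>
      obtain ⟨φ, hφ⟩ := ih
      refine ⟨φ.symm, fun x => ?_⟩
      have := hφ (φ.symm x)
      rw [Equiv.apply_symm_apply] at this
      exact hequiv.symm this
    | trans a b c hab hbc ih1 ih2 =>
      obtain ⟨φ, hφ⟩ := ih1
      obtain ⟨ρ, hρ⟩ := ih2
      exact ⟨φ.trans ρ, fun x => hequiv.trans (hφ x) (hρ (φ x))⟩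
  -- representatives of rV-classes
  let rep : G.V → G.V := fun v => Quot.out (Quot.mk rV v)
  have hrep_rel : ∀ v, rV (rep v) v := by
    intro v
    have : Quot.mk rV (rep v) = Quot.mk rV v := Quot.out_eq _
    exact (hequiv.eqvGen_iff).mp (Quot.eq.mp this)
  have hrep_eq : ∀ v w, rV v w → rep v = rep w := by
    intro v w h
    exact congrArg Quot.out (Quot.sound h)
  -- fixed transports from representatives
  let ψ : ∀ v, {e : G.E // G.o e = rep v} ≃ {e : G.E // G.o e = v} :=
    fun v => (hP (rep v) v (hrep_rel v)).choose
  have hψ : ∀ v (x : {e : G.E // G.o e = rep v}), rV (G.t x.1) (G.t ((ψ v) x).1) :=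
    fun v => (hP (rep v) v (hrep_rel v)).choose_spec
  -- the global "name" of an edge: its preimage in the representative fiber
  let κ : G.E → G.E := fun e => (((ψ (G.o e)).symm ⟨e, rfl⟩ :
    {x : G.E // G.o x = rep (G.o e)})).1
  have hcast : ∀ (v : G.V) (e : G.E) (he : G.o e = v),
      κ e = (((ψ v).symm ⟨e, he⟩ : {x : G.E // G.o x = rep v})).1 := by
    intro v e he
    subst he
    rfl
  have hκt : ∀ e : G.E, rV (G.t (κ e)) (G.t e) := by
    intro e
    have := hψ (G.o e) ((ψ (G.o e)).symm ⟨e, rfl⟩)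
    rw [Equiv.apply_symm_apply] at this
    exact this
  -- the edge relation
  set rE : G.E → G.E → Prop := fun e f => rV (G.o e) (G.o f) ∧ κ e = κ f with hrEdef
  have hErefl : ∀ e, rE e e := fun e => ⟨hequiv.refl _, rfl⟩
  refine ⟨⟨rV, rE, hequiv,
    ⟨hErefl, fun h => ⟨hequiv.symm h.1, h.2.symm⟩,
      fun h h' => ⟨hequiv.trans h.1 h'.1, h.2.trans h'.2⟩⟩,
    fun e f h => h.1,
    fun e f h => hequiv.trans (hequiv.trans (hequiv.symm (hκt e)) (h.2 ▸ hequiv.refl _))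
      (h.2 ▸ hκt f)⟩, ?_, ?_⟩
  · -- non-edge-collapsing
    intro v v' hvv' e he
    subst he
    have hrr : rep (G.o e) = rep v' := hrep_eq _ _ hvv'
    set x : {a : G.E // G.o a = rep (G.o e)} := (ψ (G.o e)).symm ⟨e, rfl⟩ with hxdef
    have hx' : G.o x.1 = rep v' := hrr ▸ x.2
    set e' : G.E := ((ψ v') ⟨x.1, hx'⟩).1 with he'def
    have he' : G.o e' = v' := ((ψ v') ⟨x.1, hx'⟩).2
    have hκe' : κ e' = x.1 := by
      rw [hcast v' e' he']
      have : (⟨e', he'⟩ : {a : G.E // G.o a = v'}) = (ψ v') ⟨x.1, hx'⟩ := Subtype.ext rfl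
      rw [this, Equiv.symm_apply_apply]
    refine ⟨e', ⟨he', by rw [he']; exact hvv', hκe'.symm⟩, ?_⟩
    rintro f ⟨hf, _, hκf⟩
    -- f and e' are both in the fiber over v' with the same name
    have h1' : κ f = x.1 := hκf.symm
    have heq : ((ψ v').symm ⟨f, hf⟩ : {a : G.E // G.o a = rep v'}) =
        (ψ v').symm ⟨e', he'⟩ := by
      apply Subtype.ext
      rw [← hcast v' f hf, ← hcast v' e' he', h1', hκe']
    have := (ψ v').symm.injective heq
    exact congrArg Subtype.val this
  · intro v w h
    exact Relation.EqvGen.rel _ _ h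
end

section
/- For any non-edge-collapsing graph equivalence relation ∼ on a directed multigraph G with root S, the unfolding tree of G at S is rooted-isomorphic to the unfolding tree of the quotient graph G/∼ at the root [S]_∼. -/
open Multigraph

namespace Statement5Aux

variable {G : Multigraph} {S : G.V}

/-- Helper: extract the last edge and the prefix of a walk. -/
def unSnoc {H : Multigraph} {R : H.V} : WalkFrom H R → Option (H.E × WalkFrom H R)
  | ⟨_, .nil⟩ => none
  | ⟨_, .snoc w e _⟩ => some (e, ⟨_, w⟩)

theorem snoc_congr {H : Multigraph} {R : H.V} {v v' : H.V} {w : Walk H R v}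
    {w' : Walk H R v'} (hw : (⟨v, w⟩ : WalkFrom H R) = ⟨v', w'⟩) (e : H.E)
    (h : H.o e = v) (h' : H.o e = v') :
    (⟨H.t e, w.snoc e h⟩ : WalkFrom H R) = ⟨H.t e, w'.snoc e h'⟩ := by
  injection hw with h1 h2
  subst h1
  cases eq_of_heq h2
  rfl

theorem mkE_congr {H : Multigraph} {R : H.V} {v v' : H.V} {w : Walk H R v}
    {w' : Walk H R v'} (hw : (⟨v, w⟩ : WalkFrom H R) = ⟨v', w'⟩) (e : H.E)
    (h : H.o e = v) (h' : H.o e = v') :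
    (⟨v, (w, ⟨e, h⟩)⟩ : (unfoldTree H R).E) = ⟨v', (w', ⟨e, h'⟩)⟩ := by
  injection hw with h1 h2
  subst h1
  cases eq_of_heq h2
  rfl

theorem rE_of_quot_eq (s : GraphEquiv G) {e f : G.E}
    (h : Quot.mk s.rE e = Quot.mk s.rE f) : s.rE e f :=
  s.equivE.eqvGen_iff.mp (Quot.eq.mp h)

theorem edge_eq {s : GraphEquiv G} (hs : s.NonEdgeCollapsing) {v : G.V} {e e' : G.E}
    (h : G.o e = v) (h' : G.o e' = v) (hr : s.rE e e') : e = e' := by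
  obtain ⟨x, _, hu⟩ := hs v v (s.equivV.refl v) e h
  exact (hu e ⟨h, s.equivE.refl e⟩).trans (hu e' ⟨h', hr⟩).symm

theorem edgeLift {s : GraphEquiv G} (hs : s.NonEdgeCollapsing) (v : G.V) (ε : s.quot.E)
    (h : s.quot.o ε = Quot.mk s.rV v) :
    ∃! e : G.E, G.o e = v ∧ Quot.mk s.rE e = ε := by
  obtain ⟨e₀, rfl⟩ := Quot.exists_rep ε
  have hrv : s.rV (G.o e₀) v := s.equivV.eqvGen_iff.mp (Quot.eq.mp h)
  obtain ⟨e, ⟨he, hre⟩, huniq⟩ := hs _ _ hrv e₀ rfl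
  refine ⟨e, ⟨he, (Quot.sound hre).symm⟩, ?_⟩
  rintro e' ⟨he', hqe'⟩
  exact huniq e' ⟨he', s.equivE.symm (rE_of_quot_eq s hqe')⟩

/-- Push a walk forward to the quotient graph. -/
def mapWalk (s : GraphEquiv G) :
    ∀ {v : G.V}, Walk G S v → Walk s.quot (Quot.mk s.rV S) (Quot.mk s.rV v)
  | _, .nil => .nil
  | _, .snoc w e h => .snoc (mapWalk s w) (Quot.mk s.rE e) (congrArg (Quot.mk s.rV) h)

theorem mapW_inj {s : GraphEquiv G} (hs : s.NonEdgeCollapsing) :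
    ∀ {v : G.V} (w : Walk G S v) {v' : G.V} (w' : Walk G S v'),
      (⟨Quot.mk s.rV v, mapWalk s w⟩ : WalkFrom s.quot (Quot.mk s.rV S)) =
        ⟨Quot.mk s.rV v', mapWalk s w'⟩ →
      (⟨v, w⟩ : WalkFrom G S) = ⟨v', w'⟩ := by
  intro v w
  induction w with
  | nil =>
    intro v' w' h
    cases w' with
    | nil => rfl
    | snoc u' e' he' =>
      have h' := congrArg unSnoc h
      simp [unSnoc, mapWalk] at h'
  | snoc u e he ih =>
    intro v' w' h
    cases w' with
    | nil =>
      have h' := congrArg unSnoc h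
      simp [unSnoc, mapWalk] at h'
    | snoc u' e' he' =>
      have h2 : some ((Quot.mk s.rE e : s.quot.E),
            (⟨_, mapWalk s u⟩ : WalkFrom s.quot (Quot.mk s.rV S))) =
          some ((Quot.mk s.rE e' : s.quot.E), ⟨_, mapWalk s u'⟩) := congrArg unSnoc h
      rw [Option.some.injEq] at h2
      have hee : Quot.mk s.rE e = Quot.mk s.rE e' := congrArg Prod.fst h2
      have hww := ih u' (congrArg Prod.snd h2)
      injection hww with h1 h3
      subst h1
      cases eq_of_heq h3
      cases edge_eq hs he he' (rE_of_quot_eq s hee)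
      rfl

theorem mapW_surj {s : GraphEquiv G} (hs : s.NonEdgeCollapsing) :
    ∀ {V : s.quot.V} (W : Walk s.quot (Quot.mk s.rV S) V),
      ∃ (v : G.V) (w : Walk G S v),
        (⟨Quot.mk s.rV v, mapWalk s w⟩ : WalkFrom s.quot (Quot.mk s.rV S)) = ⟨V, W⟩ := by
  intro V W
  induction W with
  | nil => exact ⟨S, .nil, rfl⟩
  | snoc W' ε hε ih =>
    obtain ⟨v, w, hw⟩ := ih
    have h1 : s.quot.o ε = Quot.mk s.rV v := hε.trans (congrArg Sigma.fst hw).symm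
    obtain ⟨e, ⟨he, heq⟩, -⟩ := edgeLift hs v ε h1
    refine ⟨G.t e, w.snoc e he, ?_⟩
    subst heq
    have hres := snoc_congr (H := s.quot) (R := Quot.mk s.rV S) hw (Quot.mk s.rE e) (congrArg (Quot.mk s.rV) he) hε
    exact hres

end Statement5Aux

open Statement5Aux in
/-- Quotienting by a non-edge-collapsing equivalence relation does not
change the unfolding tree. -/
theorem statement5 (G : Multigraph) (S : G.V) (hS : IsRoot G S)
    (s : GraphEquiv G) (hs : s.NonEdgeCollapsing) :
    RootedIso (unfoldTree G S) (nilWalk G S)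
      (unfoldTree s.quot (Quot.mk s.rV S)) (nilWalk s.quot (Quot.mk s.rV S)) := by
  refine ⟨⟨⟨fun x => ⟨Quot.mk s.rV x.1, mapWalk s x.2⟩,
      fun x => ⟨Quot.mk s.rV x.1, (mapWalk s x.2.1,
        ⟨Quot.mk s.rE x.2.2.1, congrArg (Quot.mk s.rV) x.2.2.2⟩)⟩,
      fun e => rfl, ?_⟩, ?_, ?_⟩, rfl⟩
  · rintro ⟨v, w, e, he⟩
    rfl
  · constructor
    · rintro ⟨v, w⟩ ⟨v', w'⟩ h
      exact mapW_inj hs w w' h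
    · rintro ⟨V, W⟩
      obtain ⟨v, w, hw⟩ := mapW_surj hs W
      exact ⟨⟨v, w⟩, hw⟩
  · constructor
    · rintro ⟨v, w, e, he⟩ ⟨v', w', e', he'⟩ h
      have hπ := congrArg (fun x : (unfoldTree s.quot (Quot.mk s.rV S)).E =>
        ((⟨x.1, x.2.1⟩ : WalkFrom s.quot (Quot.mk s.rV S)), x.2.2.1)) h
      have hw := mapW_inj hs w w' (congrArg Prod.fst hπ)
      have hee : Quot.mk s.rE e = Quot.mk s.rE e' := congrArg Prod.snd hπ
      injection hw with h1 h2
      subst h1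
      cases eq_of_heq h2
      cases edge_eq hs he he' (rE_of_quot_eq s hee)
      rfl
    · rintro ⟨V, W, ε, hε⟩
      obtain ⟨v, w, hw⟩ := mapW_surj hs W
      have h1 : s.quot.o ε = Quot.mk s.rV v := hε.trans (congrArg Sigma.fst hw).symm
      obtain ⟨e, ⟨he, heq⟩, -⟩ := edgeLift hs v ε h1
      refine ⟨⟨v, (w, ⟨e, he⟩)⟩, ?_⟩
      subst heq
      have hres := mkE_congr (H := s.quot) (R := Quot.mk s.rV S) hw (Quot.mk s.rE e) (congrArg (Quot.mk s.rV) he) hε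
      exact hres
end

section
/- For any rooted multigraph (G, S), any vertex x of G, and any walk w starting at S with terminus x, the unfolding tree T(G_x, x) of the outgoing subgraph rooted at x is rooted-isomorphic to the half-tree T(G, S)_w of the unfolding tree rooted at the walk w. -/
open Multigraph

namespace Multigraph

variable {G : Multigraph} {S : G.V}

/-- The list of edges of a walk, most recent first. -/
def Walk.edges : ∀ {z : G.V}, Walk G S z → List G.E
  | _, .nil => []
  | _, .snoc u e _ => e :: u.edges

/-- Edge list of a walk-from, for congruence arguments. -/
def edgesW (u : WalkFrom G S) : List G.E := u.2.edges

theorem Walk.eq_of_edges_eq {z : G.V} (u : Walk G S z) :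
    ∀ {z' : G.V} (u' : Walk G S z'), u.edges = u'.edges →
      (⟨z, u⟩ : WalkFrom G S) = ⟨z', u'⟩ := by
  induction u with
  | nil =>
    intro z' u' h
    cases u' with
    | nil => rfl
    | snoc u' e h' => simp [Walk.edges] at h
  | snoc u e he ih =>
    intro z' u' h
    cases u' with
    | nil => simp [Walk.edges] at h
    | snoc u'' e'' h'' =>
      simp only [Walk.edges, List.cons.injEq] at h
      obtain ⟨rfl, h2⟩ := h
      obtain ⟨rfl, h4⟩ := Sigma.mk.inj_iff.mp (ih u'' h2)
      cases h4
      rfl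

/-- Appending a walk of the outgoing subgraph to a walk ending at `v`. -/
def appendW {v : G.V} (w0 : Walk G S v) :
    ∀ {y : (outGraph G v).V}, Walk (outGraph G v) (rootOut G v) y → Walk G S y.1
  | _, .nil => w0
  | _, .snoc u e h => (appendW w0 u).snoc e.1 (congrArg Subtype.val h)

theorem edges_appendW {v : G.V} (w0 : Walk G S v) :
    ∀ {y : (outGraph G v).V} (u : Walk (outGraph G v) (rootOut G v) y),
      (appendW w0 u).edges = u.edges.map Subtype.val ++ w0.edges
  | _, .nil => rfl
  | _, .snoc u e h => by simp [appendW, Walk.edges, edges_appendW w0 u]; rfl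

theorem appendW_prefix {v : G.V} (w0 : Walk G S v) :
    ∀ {y : (outGraph G v).V} (u : Walk (outGraph G v) (rootOut G v) y),
      IsPrefix G S ⟨v, w0⟩ ⟨y.1, appendW w0 u⟩
  | _, .nil => .refl _
  | _, .snoc u e h => .snoc (appendW w0 u) e.1 (congrArg Subtype.val h) (appendW_prefix w0 u)

theorem IsPrefix.length_le {w u : WalkFrom G S} (h : IsPrefix G S w u) :
    w.2.length ≤ u.2.length := by
  induction h with
  | refl => exact le_refl _
  | snoc u e h hp ih => exact le_trans ih (Nat.le_succ _)

theorem exists_appendW {v : G.V} (w0 : Walk G S v) {u : WalkFrom G S}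
    (hpre : IsPrefix G S ⟨v, w0⟩ u) :
    ∃ (y : (outGraph G v).V) (p : Walk (outGraph G v) (rootOut G v) y),
      (⟨y.1, appendW w0 p⟩ : WalkFrom G S) = u := by
  induction hpre with
  | refl => exact ⟨rootOut G v, .nil, rfl⟩
  | @snoc v' u' e h hp ih =>
    obtain ⟨y, p, hy⟩ := ih
    have hy1 : y.1 = v' := congrArg Sigma.fst hy
    have re : Reaches G v (G.o e) := by rw [h, ← hy1]; exact y.2
    refine ⟨_, p.snoc ⟨e, re⟩ (Subtype.ext (h.trans hy1.symm)), ?_⟩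
    apply Walk.eq_of_edges_eq
    exact congrArg (fun t => e :: edgesW t) hy

/-- Edges of the unfolding tree are determined by their terminus. -/
theorem treeEdge_t_inj (f f' : (unfoldTree G S).E)
    (h : (unfoldTree G S).t f = (unfoldTree G S).t f') : f = f' := by
  obtain ⟨z, u, e, he⟩ := f
  obtain ⟨z', u', e', he'⟩ := f'
  have h2 := congrArg edgesW h
  simp only [unfoldTree, edgesW, Walk.edges, List.cons.injEq] at h2
  obtain ⟨rfl, h3⟩ := h2
  obtain ⟨rfl, h5⟩ := Sigma.mk.inj_iff.mp (Walk.eq_of_edges_eq u u' h3)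
  cases h5
  rfl

theorem IsPrefix.edges_le {w u : WalkFrom G S} (h : IsPrefix G S w u) :
    (edgesW w).length ≤ (edgesW u).length := by
  induction h with
  | refl => exact le_refl _
  | snoc u e h hp ih => exact le_trans ih (Nat.le_succ _)

theorem halfEdge_t_inj {w : WalkFrom G S} (f f' : (halfTree G S w).E)
    (h : (halfTree G S w).t f = (halfTree G S w).t f') : f = f' :=
  Subtype.ext (treeEdge_t_inj f.1 f'.1 (congrArg Subtype.val h))

/-- The canonical map from the unfolding tree of `G_v` to the half-tree at `w0`. -/
def treeToHalf {v : G.V} (w0 : Walk G S v) :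
    Hom (unfoldTree (outGraph G v) (rootOut G v)) (halfTree G S ⟨v, w0⟩) where
  onV a := ⟨⟨a.1.1, appendW w0 a.2⟩, appendW_prefix w0 a.2⟩
  onE g := ⟨⟨g.1.1, (appendW w0 g.2.1, ⟨g.2.2.1.1, congrArg Subtype.val g.2.2.2⟩)⟩,
    appendW_prefix w0 g.2.1⟩
  map_o g := rfl
  map_t g := rfl

theorem treeToHalf_injV {v : G.V} (w0 : Walk G S v) :
    Function.Injective (treeToHalf w0).onV := by
  rintro ⟨y, p⟩ ⟨y', p'⟩ h
  have h1 : (⟨y.1, appendW w0 p⟩ : WalkFrom G S) = ⟨y'.1, appendW w0 p'⟩ :=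
    congrArg Subtype.val h
  have h2 : (appendW w0 p).edges = (appendW w0 p').edges := congrArg edgesW h1
  rw [edges_appendW, edges_appendW] at h2
  have h3 := List.append_cancel_right h2
  have h4 : p.edges = p'.edges :=
    List.map_injective_iff.mpr Subtype.val_injective h3
  exact Walk.eq_of_edges_eq p p' h4

theorem treeToHalf_surjV {v : G.V} (w0 : Walk G S v) :
    Function.Surjective (treeToHalf w0).onV := by
  rintro ⟨u, hpre⟩
  obtain ⟨y, p, hyp⟩ := exists_appendW w0 hpre
  exact ⟨⟨y, p⟩, Subtype.ext hyp⟩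

theorem treeToHalf_injE {v : G.V} (w0 : Walk G S v) :
    Function.Injective (treeToHalf w0).onE := by
  intro g g' h
  have h2 : (treeToHalf w0).onV ((unfoldTree (outGraph G v) (rootOut G v)).t g)
      = (treeToHalf w0).onV ((unfoldTree (outGraph G v) (rootOut G v)).t g') := by
    rw [← (treeToHalf w0).map_t, ← (treeToHalf w0).map_t, h]
  exact treeEdge_t_inj g g' (treeToHalf_injV w0 h2)

theorem treeToHalf_surjE {v : G.V} (w0 : Walk G S v) :
    Function.Surjective (treeToHalf w0).onE := by
  rintro ⟨⟨z, u, e, he⟩, hpre⟩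
  obtain ⟨⟨y, p⟩, ha⟩ :=
    treeToHalf_surjV w0 ((halfTree G S ⟨v, w0⟩).t ⟨⟨z, u, e, he⟩, hpre⟩)
  cases p with
  | nil =>
    exfalso
    have h1 : (⟨v, w0⟩ : WalkFrom G S) = ⟨G.t e, u.snoc e he⟩ := congrArg Subtype.val ha
    have h2 : w0.edges.length = u.edges.length + 1 :=
      congrArg (fun t => (edgesW t).length) h1
    have h3 : w0.edges.length ≤ u.edges.length := hpre.edges_le
    omega
  | snoc p' ε hε =>
    refine ⟨⟨_, p', ε, hε⟩, ?_⟩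
    have h2 : (halfTree G S ⟨v, w0⟩).t ((treeToHalf w0).onE ⟨_, p', ε, hε⟩)
        = (halfTree G S ⟨v, w0⟩).t ⟨⟨z, u, e, he⟩, hpre⟩ :=
      ((treeToHalf w0).map_t ⟨_, p', ε, hε⟩).trans ha
    exact halfEdge_t_inj _ _ h2

end Multigraph

/-- The unfolding tree of the outgoing subgraph `G_x` is rooted-isomorphic
to the half-tree of `T(G,S)` at any walk `w` with terminus `x`. -/
theorem statement9 (G : Multigraph) (S : G.V) (hS : IsRoot G S)
    (x : G.V) (w : WalkFrom G S) (hw : term w = x) :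
    RootedIso (unfoldTree (outGraph G x) (rootOut G x)) (nilWalk (outGraph G x) (rootOut G x))
      (halfTree G S w) ⟨w, IsPrefix.refl w⟩ := by
  obtain ⟨v0, w0⟩ := w
  subst hw
  exact ⟨{ toHom := treeToHalf w0,
           bijV := ⟨treeToHalf_injV w0, treeToHalf_surjV w0⟩,
           bijE := ⟨treeToHalf_injE w0, treeToHalf_surjE w0⟩ }, rfl⟩
end

section
/- Let G be a multigraph with root S, and let S be a subspace of the unfolding tree T(G, S). Then there exists a unique set B of walks in S such that no two distinct elements of B are prefixes of each other and every walk in S has a prefix in B. Moreover: S is inescapable if and only if every walk starting at S is comparable in the prefix order with some element of B, and S is cofinite if and only if B is finite. -/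
open Multigraph

section Aux
variable {G : Multigraph} {S : G.V}

theorem prefix_trans {a b c : WalkFrom G S} (h1 : IsPrefix G S a b)
    (h2 : IsPrefix G S b c) : IsPrefix G S a c := by
  induction h2 with
  | refl => exact h1
  | snoc u e h _ ih => exact .snoc u e h ih

theorem prefix_length {a b : WalkFrom G S} (h : IsPrefix G S a b) :
    a.2.length ≤ b.2.length := by
  induction h with
  | refl => exact le_refl _
  | snoc u e h _ ih => exact ih.trans (Nat.le_succ _)

theorem prefix_length_lt {a b : WalkFrom G S} (h : IsPrefix G S a b) (hne : a ≠ b) :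
    a.2.length < b.2.length := by
  cases h with
  | refl => exact absurd rfl hne
  | snoc u e h h' => exact Nat.lt_succ_of_le (prefix_length h')

theorem prefix_antisymm {a b : WalkFrom G S} (h1 : IsPrefix G S a b)
    (h2 : IsPrefix G S b a) : a = b := by
  by_contra hne
  exact absurd (prefix_length_lt h1 hne) (not_lt.2 (prefix_length h2))

def dropLast : WalkFrom G S → WalkFrom G S
  | ⟨_, Walk.nil⟩ => ⟨S, Walk.nil⟩
  | ⟨_, Walk.snoc u _ _⟩ => ⟨_, u⟩

theorem prefix_snoc_inv {a w : WalkFrom G S} (h1 : IsPrefix G S a w) :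
    ∀ {v : G.V} (u : Walk G S v) (e : G.E) (he : G.o e = v),
      w = ⟨G.t e, u.snoc e he⟩ → a = w ∨ IsPrefix G S a ⟨v, u⟩ := by
  cases h1 with
  | refl => exact fun _ _ _ _ => Or.inl rfl
  | snoc u' e' h' ha' =>
    intro v u e he heq
    have h2 : (⟨_, u'⟩ : WalkFrom G S) = ⟨v, u⟩ := by
      have h3 := congrArg dropLast heq
      simpa [dropLast] using h3
    exact Or.inr (h2 ▸ ha')

theorem prefix_total {w a b : WalkFrom G S} (h1 : IsPrefix G S a w)
    (h2 : IsPrefix G S b w) : IsPrefix G S a b ∨ IsPrefix G S b a := by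
  induction h2 generalizing a with
  | refl => exact Or.inl h1
  | snoc u e h hb ih =>
    rcases prefix_snoc_inv h1 u e h rfl with rfl | ha'
    · exact Or.inr (IsPrefix.snoc u e h hb)
    · exact ih ha'

end Aux

theorem exists_min (𝒮 : Set (WalkFrom G S)) {w : WalkFrom G S} (hw : w ∈ 𝒮) :
    ∃ b, b ∈ 𝒮 ∧ IsPrefix G S b w ∧ ∀ u ∈ 𝒮, IsPrefix G S u b → u = b := by
  suffices h : ∀ n (w : WalkFrom G S), w.2.length = n → w ∈ 𝒮 →
      ∃ b, b ∈ 𝒮 ∧ IsPrefix G S b w ∧ ∀ u ∈ 𝒮, IsPrefix G S u b → u = b by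
    exact h _ w rfl hw
  intro n
  induction n using Nat.strong_induction_on with
  | _ n ih =>
    intro w hn hw
    by_cases hmin : ∀ u ∈ 𝒮, IsPrefix G S u w → u = w
    · exact ⟨w, hw, IsPrefix.refl w, hmin⟩
    · push_neg at hmin
      obtain ⟨u, hu, hup, hune⟩ := hmin
      obtain ⟨b, hb, hbp, hbm⟩ := ih u.2.length (hn ▸ prefix_length_lt hup hune) u rfl hu
      exact ⟨b, hb, prefix_trans hbp hup, hbm⟩


/-- Every subspace of the unfolding tree has a unique basis; the subspace
is inescapable iff every walk is prefix-comparable with a basis element, and cofinite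
iff the basis is finite. -/
theorem statement10 (G : Multigraph) (S : G.V) (hS : IsRoot G S)
    (𝒮 : Set (WalkFrom G S)) (hsub : IsSubspace G S 𝒮) :
    (∃! B : Set (WalkFrom G S), IsBasis G S 𝒮 B) ∧
    ∀ B : Set (WalkFrom G S), IsBasis G S 𝒮 B →
      ((Inescapable G S 𝒮 ↔ ∀ w : WalkFrom G S, ∃ b ∈ B,
          IsPrefix G S w b ∨ IsPrefix G S b w) ∧
       (CofiniteSubspace G S 𝒮 ↔ B.Finite)) := by
  classical
  set B0 : Set (WalkFrom G S) := {w | w ∈ 𝒮 ∧ ∀ u ∈ 𝒮, IsPrefix G S u w → u = w} with hB0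
  have hbasis : IsBasis G S 𝒮 B0 := by
    refine ⟨fun b hb => hb.1, fun b hb b' hb' hp => hb'.2 b hb.1 hp, fun w hw => ?_⟩
    obtain ⟨b, hb, hbp, hbm⟩ := exists_min 𝒮 hw
    exact ⟨b, ⟨hb, hbm⟩, hbp⟩
  have huniq : ∀ B, IsBasis G S 𝒮 B → B = B0 := by
    intro B ⟨hBsub, hBanti, hBcov⟩
    ext b
    constructor
    · intro hb
      refine ⟨hBsub hb, fun u hu hup => ?_⟩
      obtain ⟨b', hb', hb'p⟩ := hBcov u hu
      have : b' = b := hBanti b' hb' b hb (prefix_trans hb'p hup)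
      subst this
      exact prefix_antisymm hup hb'p
    · intro ⟨hb, hbm⟩
      obtain ⟨b', hb', hb'p⟩ := hBcov b hb
      have : b' = b := hbm b' (hBsub hb') hb'p
      exact this ▸ hb'
  constructor
  · exact ⟨B0, hbasis, huniq⟩
  · intro B hB
    obtain ⟨hBsub, hBanti, hBcov⟩ := hB
    constructor
    · constructor
      · intro hin w
        obtain ⟨u, hu, hwu⟩ := hin w
        obtain ⟨b, hb, hbu⟩ := hBcov u hu
        exact ⟨b, hb, (prefix_total hbu hwu).symm⟩
      · intro hcomp w
        obtain ⟨b, hb, hc⟩ := hcomp w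
        rcases hc with h | h
        · exact ⟨b, hBsub hb, h⟩
        · exact ⟨w, hsub b (hBsub hb) w h, IsPrefix.refl w⟩
    · constructor
      · rintro ⟨F, hF, rfl⟩
        refine hF.subset fun b hb => ?_
        have hbS : b ∈ {u | ∃ x ∈ F, IsPrefix G S x u} := hBsub hb
        obtain ⟨x, hx, hxb⟩ := hbS
        have hxS : x ∈ {u | ∃ x ∈ F, IsPrefix G S x u} := ⟨x, hx, IsPrefix.refl x⟩
        obtain ⟨b', hb', hb'x⟩ := hBcov x hxS
        have hbb : b' = b := hBanti b' hb' b hb (prefix_trans hb'x hxb)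
        subst hbb
        have : x = b' := prefix_antisymm (prefix_antisymm hb'x hxb ▸ hxb) hb'x
        exact this ▸ hx
      · intro hBfin
        refine ⟨B, hBfin, ?_⟩
        ext u
        constructor
        · intro hu; exact hBcov u hu
        · rintro ⟨b, hb, hbu⟩; exact hsub b (hBsub hb) u hbu
end
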